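/- Let (T₀,T₁) be a pair of nonzero complex polynomials and let (y₀,y₁) lie in a population of critical points corresponding to (T₀,T₁). Let y₀^{[0]} and y₁^{[1]} be polynomials with Wr(y₀,y₀^{[0]}) = T₀·y₁² and Wr(y₁,y₁^{[1]}) = T₁·y₀². Let f₀, f₁ be nonzero rational functions over ℂ such that f₀·y₀, f₁·y₁, f₀·y₀^{[0]}, f₁·y₁^{[1]}, T₀·f₀²/f₁², and T₁·f₁²/f₀² are all polynomials. Then the pair (f₀·y₀, f₁·y₁) is fertile with respect to (T₀·f₀²/f₁², T₁·f₁²/f₀²). -/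

import Mathlib

open Polynomial

noncomputable section

/-- The Wronskian of two polynomials: `Wr(f,g) = f·g′ − f′·g`. -/
def pWr (f g : ℂ[X]) : ℂ[X] := f * derivative g - derivative f * g

/-- A pair `y = (y₀,y₁)` of nonzero polynomials is fertile with respect to a pair
`T = (T₀,T₁)` if there exist `ỹ₀, ỹ₁` with `Wr(y₀,ỹ₀) = T₀·y₁²` and `Wr(y₁,ỹ₁) = T₁·y₀²`. -/
def Fertile (T y : ℂ[X] × ℂ[X]) : Prop :=
  y.1 ≠ 0 ∧ y.2 ≠ 0 ∧
  ∃ ty0 ty1 : ℂ[X], pWr y.1 ty0 = T.1 * y.2 ^ 2 ∧ pWr y.2 ty1 = T.2 * y.1 ^ 2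

/-- Reproduction in direction 0: replace `(y₀,y₁)` by `(ỹ₀,y₁)` with `Wr(y₀,ỹ₀) = T₀·y₁²`. -/
def Reprod0 (T y z : ℂ[X] × ℂ[X]) : Prop :=
  z.2 = y.2 ∧ pWr y.1 z.1 = T.1 * y.2 ^ 2

/-- Reproduction in direction 1: replace `(y₀,y₁)` by `(y₀,ỹ₁)` with `Wr(y₁,ỹ₁) = T₁·y₀²`. -/
def Reprod1 (T y z : ℂ[X] × ℂ[X]) : Prop :=
  z.1 = y.1 ∧ pWr y.2 z.2 = T.2 * y.1 ^ 2

/-- Reproduction (in either direction). -/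
def Reprod (T y z : ℂ[X] × ℂ[X]) : Prop := Reprod0 T y z ∨ Reprod1 T y z

/-- A pair is super-fertile w.r.t. `T` if every pair obtained from it by a finite (possibly
empty) sequence of reproductions w.r.t. `T` is fertile w.r.t. `T`. -/
def SuperFertile (T y : ℂ[X] × ℂ[X]) : Prop :=
  ∀ z, Relation.ReflTransGen (Reprod T) y z → Fertile T z

/-- A pair `(y₀,y₁)` is generic w.r.t. `(T₀,T₁)`: `y₀,y₁` squarefree, coprime to each other,
and `yᵢ` coprime with `Tᵢ`. -/
def Generic (T y : ℂ[X] × ℂ[X]) : Prop :=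
  Squarefree y.1 ∧ Squarefree y.2 ∧ IsCoprime y.1 y.2 ∧
    IsCoprime y.1 T.1 ∧ IsCoprime y.2 T.2

/-- A pair represents a critical point w.r.t. `T` if it is generic and fertile w.r.t. `T`. -/
def IsCriticalPt (T y : ℂ[X] × ℂ[X]) : Prop := Generic T y ∧ Fertile T y

/-- A pair lies in a population of critical points corresponding to `T` if it is obtained by a
finite (possibly empty) sequence of reproductions from a pair representing a critical point. -/
def InPopulation (T y : ℂ[X] × ℂ[X]) : Prop :=
  ∃ y₀, IsCriticalPt T y₀ ∧ Relation.ReflTransGen (Reprod T) y₀ y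


lemma pWr_mul (c f g : ℂ[X]) : pWr (c * f) (c * g) = c ^ 2 * pWr f g := by
  simp only [pWr, derivative_mul]; ring

lemma pWr_zero_right (f : ℂ[X]) : pWr f 0 = 0 := by simp [pWr]

lemma pop_ne_zero (T : ℂ[X] × ℂ[X]) (hT0 : T.1 ≠ 0) (hT1 : T.2 ≠ 0)
    {y z : ℂ[X] × ℂ[X]} (hy : y.1 ≠ 0 ∧ y.2 ≠ 0)
    (h : Relation.ReflTransGen (Reprod T) y z) : z.1 ≠ 0 ∧ z.2 ≠ 0 := by
  induction h with
  | refl => exact hy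
  | tail _ hstep ih =>
    rcases hstep with ⟨h2, hw⟩ | ⟨h1, hw⟩
    · refine ⟨?_, h2 ▸ ih.2⟩
      intro h0
      rw [h0, pWr_zero_right] at hw
      exact (mul_ne_zero hT0 (pow_ne_zero 2 ih.2)) hw.symm
    · refine ⟨h1 ▸ ih.1, ?_⟩
      intro h0
      rw [h0, pWr_zero_right] at hw
      exact (mul_ne_zero hT1 (pow_ne_zero 2 ih.1)) hw.symm

/-- Dividing a point of a population (and witnesses of its reproductions) by rational
functions `f₀, f₁`, so that all the displayed products and the modified `T`'s are
polynomials, produces a fertile pair. -/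
theorem divide_population_fertile (T0 T1 y0 y1 ty0 ty1 : ℂ[X])
    (hT0 : T0 ≠ 0) (hT1 : T1 ≠ 0)
    (hpop : InPopulation (T0, T1) (y0, y1))
    (hw0 : pWr y0 ty0 = T0 * y1 ^ 2) (hw1 : pWr y1 ty1 = T1 * y0 ^ 2)
    (f0 f1 : RatFunc ℂ) (hf0 : f0 ≠ 0) (hf1 : f1 ≠ 0)
    (p0 p1 q0 q1 S0 S1 : ℂ[X])
    (hp0 : algebraMap ℂ[X] (RatFunc ℂ) p0 = f0 * algebraMap ℂ[X] (RatFunc ℂ) y0)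
    (hp1 : algebraMap ℂ[X] (RatFunc ℂ) p1 = f1 * algebraMap ℂ[X] (RatFunc ℂ) y1)
    (hq0 : algebraMap ℂ[X] (RatFunc ℂ) q0 = f0 * algebraMap ℂ[X] (RatFunc ℂ) ty0)
    (hq1 : algebraMap ℂ[X] (RatFunc ℂ) q1 = f1 * algebraMap ℂ[X] (RatFunc ℂ) ty1)
    (hS0 : algebraMap ℂ[X] (RatFunc ℂ) S0 =
      algebraMap ℂ[X] (RatFunc ℂ) T0 * f0 ^ 2 / f1 ^ 2)
    (hS1 : algebraMap ℂ[X] (RatFunc ℂ) S1 =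
      algebraMap ℂ[X] (RatFunc ℂ) T1 * f1 ^ 2 / f0 ^ 2) :
    Fertile (S0, S1) (p0, p1) := by
  classical
  obtain ⟨ys, ⟨_, hfert⟩, hchain⟩ := hpop
  obtain ⟨hy0, hy1⟩ := pop_ne_zero (T0, T1) hT0 hT1 ⟨hfert.1, hfert.2.1⟩ hchain
  have hinj : Function.Injective (algebraMap ℂ[X] (RatFunc ℂ)) := RatFunc.algebraMap_injective ℂ
  set a0 := f0.num with ha0
  set b0 := f0.denom with hb0
  set a1 := f1.num with ha1
  set b1 := f1.denom with hb1
  have hb0ne : b0 ≠ 0 := f0.denom_ne_zero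
  have hb1ne : b1 ≠ 0 := f1.denom_ne_zero
  have ha0ne : a0 ≠ 0 := RatFunc.num_ne_zero hf0
  have ha1ne : a1 ≠ 0 := RatFunc.num_ne_zero hf1
  have hb0R : algebraMap ℂ[X] (RatFunc ℂ) b0 ≠ 0 := RatFunc.algebraMap_ne_zero hb0ne
  have hb1R : algebraMap ℂ[X] (RatFunc ℂ) b1 ≠ 0 := RatFunc.algebraMap_ne_zero hb1ne
  have ha0R : algebraMap ℂ[X] (RatFunc ℂ) a0 ≠ 0 := RatFunc.algebraMap_ne_zero ha0ne
  have ha1R : algebraMap ℂ[X] (RatFunc ℂ) a1 ≠ 0 := RatFunc.algebraMap_ne_zero ha1ne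
  have hf0eq : f0 = algebraMap ℂ[X] (RatFunc ℂ) a0 / algebraMap ℂ[X] (RatFunc ℂ) b0 := (f0.num_div_denom).symm
  have hf1eq : f1 = algebraMap ℂ[X] (RatFunc ℂ) a1 / algebraMap ℂ[X] (RatFunc ℂ) b1 := (f1.num_div_denom).symm
  -- polynomial relations
  have E1 : p0 * b0 = a0 * y0 := by
    apply hinj
    rw [map_mul, map_mul, hp0, hf0eq]
    field_simp
  have E2 : q0 * b0 = a0 * ty0 := by
    apply hinj
    rw [map_mul, map_mul, hq0, hf0eq]
    field_simp
  have E3 : p1 * b1 = a1 * y1 := by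
    apply hinj
    rw [map_mul, map_mul, hp1, hf1eq]
    field_simp
  have E4 : q1 * b1 = a1 * ty1 := by
    apply hinj
    rw [map_mul, map_mul, hq1, hf1eq]
    field_simp
  have E5 : S0 * a1 ^ 2 * b0 ^ 2 = T0 * a0 ^ 2 * b1 ^ 2 := by
    apply hinj
    have := hS0
    rw [hf0eq, hf1eq] at this
    simp only [map_mul, map_pow]
    rw [this]
    field_simp
  have E6 : S1 * a0 ^ 2 * b1 ^ 2 = T1 * a1 ^ 2 * b0 ^ 2 := by
    apply hinj
    have := hS1
    rw [hf0eq, hf1eq] at this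
    simp only [map_mul, map_pow]
    rw [this]
    field_simp
  have hp0ne : p0 ≠ 0 := by
    intro h
    apply mul_ne_zero ha0ne hy0
    rw [← E1, h, zero_mul]
  have hp1ne : p1 ≠ 0 := by
    intro h
    apply mul_ne_zero ha1ne hy1
    rw [← E3, h, zero_mul]
  refine ⟨hp0ne, hp1ne, q0, q1, ?_, ?_⟩
  · have key : (b0 * b1) ^ 2 * pWr p0 q0 = (b0 * b1) ^ 2 * (S0 * p1 ^ 2) := by
      have L : b1 ^ 2 * pWr (b0 * p0) (b0 * q0) = b1 ^ 2 * (a0 ^ 2 * (T0 * y1 ^ 2)) := by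
        rw [show b0 * p0 = a0 * y0 by rw [mul_comm]; exact E1,
            show b0 * q0 = a0 * ty0 by rw [mul_comm]; exact E2, pWr_mul, hw0]
      rw [pWr_mul] at L
      calc (b0 * b1) ^ 2 * pWr p0 q0 = b1 ^ 2 * (b0 ^ 2 * pWr p0 q0) := by ring
        _ = b1 ^ 2 * (a0 ^ 2 * (T0 * y1 ^ 2)) := L
        _ = (T0 * a0 ^ 2 * b1 ^ 2) * y1 ^ 2 := by ring
        _ = (S0 * a1 ^ 2 * b0 ^ 2) * y1 ^ 2 := by rw [E5]
        _ = S0 * b0 ^ 2 * (a1 * y1) ^ 2 := by ring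
        _ = S0 * b0 ^ 2 * (p1 * b1) ^ 2 := by rw [E3]
        _ = (b0 * b1) ^ 2 * (S0 * p1 ^ 2) := by ring
    exact mul_left_cancel₀ (pow_ne_zero 2 (mul_ne_zero hb0ne hb1ne)) key
  · have key : (b0 * b1) ^ 2 * pWr p1 q1 = (b0 * b1) ^ 2 * (S1 * p0 ^ 2) := by
      have L : b0 ^ 2 * pWr (b1 * p1) (b1 * q1) = b0 ^ 2 * (a1 ^ 2 * (T1 * y0 ^ 2)) := by
        rw [show b1 * p1 = a1 * y1 by rw [mul_comm]; exact E3,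
            show b1 * q1 = a1 * ty1 by rw [mul_comm]; exact E4, pWr_mul, hw1]
      rw [pWr_mul] at L
      calc (b0 * b1) ^ 2 * pWr p1 q1 = b0 ^ 2 * (b1 ^ 2 * pWr p1 q1) := by ring
        _ = b0 ^ 2 * (a1 ^ 2 * (T1 * y0 ^ 2)) := L
        _ = (T1 * a1 ^ 2 * b0 ^ 2) * y0 ^ 2 := by ring
        _ = (S1 * a0 ^ 2 * b1 ^ 2) * y0 ^ 2 := by rw [E6]
        _ = S1 * b1 ^ 2 * (a0 * y0) ^ 2 := by ring
        _ = S1 * b1 ^ 2 * (p0 * b0) ^ 2 := by rw [E1]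
        _ = (b0 * b1) ^ 2 * (S1 * p0 ^ 2) := by ring
    exact mul_left_cancel₀ (pow_ne_zero 2 (mul_ne_zero hb0ne hb1ne)) key
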